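/- Let a, b > 0 be real numbers and 0 < ν, τ < 1. If (b - a)(τ - ν) ≥ 0, then a #_τ b ≥ (a !_τ b) · ((a #_ν b)/(a !_ν b))^{τ(1-τ)/(ν(1-ν))}. If (b - a)(τ - ν) ≤ 0, then a #_τ b ≤ (a !_τ b) · ((a #_ν b)/(a !_ν b))^{τ(1-τ)/(ν(1-ν))}. -/

import Mathlib

/-- The weighted harmonic mean of positive reals: `a !_t b = ((1-t)a⁻¹ + t b⁻¹)⁻¹`. -/
noncomputable def wharm (t a b : ℝ) : ℝ := ((1 - t) * a⁻¹ + t * b⁻¹)⁻¹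

/-- The weighted geometric mean: `a #_t b = a^(1-t) * b^t`. -/
noncomputable def wgeom (t a b : ℝ) : ℝ := a ^ (1 - t) * b ^ t

/-- Auxiliary function: `ν(1-ν)·log(Gτ/Hτ) - τ(1-τ)·log(Gν/Hν)` as a function of `b`. -/
noncomputable def auxF (a ν τ b : ℝ) : ℝ :=
  ν * (1 - ν) * ((1 - τ) * Real.log a + τ * Real.log b
      + Real.log ((1 - τ) * a⁻¹ + τ * b⁻¹))
  - τ * (1 - τ) * ((1 - ν) * Real.log a + ν * Real.log b
      + Real.log ((1 - ν) * a⁻¹ + ν * b⁻¹))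

lemma auxC_pos {t a b : ℝ} (ht : t ∈ Set.Ioo (0 : ℝ) 1) (ha : 0 < a) (hb : 0 < b) :
    0 < (1 - t) * a⁻¹ + t * b⁻¹ := by
  have h1 : 0 < 1 - t := by linarith [ht.2]
  have h2 := ht.1
  positivity

lemma auxLog_hasDerivAt {t a b : ℝ} (ht : t ∈ Set.Ioo (0 : ℝ) 1) (ha : 0 < a) (hb : 0 < b) :
    HasDerivAt (fun b : ℝ => (1 - t) * Real.log a + t * Real.log b
        + Real.log ((1 - t) * a⁻¹ + t * b⁻¹))
      (t * b⁻¹ + t * (-(b ^ 2)⁻¹) / ((1 - t) * a⁻¹ + t * b⁻¹)) b := by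
  have hc := auxC_pos ht ha hb
  have h1 : HasDerivAt (fun b : ℝ => (1 - t) * a⁻¹ + t * b⁻¹) (t * (-(b ^ 2)⁻¹)) b :=
    ((hasDerivAt_inv hb.ne').const_mul t).const_add _
  have h2 := h1.log hc.ne'
  have h3 : HasDerivAt (fun b : ℝ => (1 - t) * Real.log a + t * Real.log b)
      (t * b⁻¹) b := ((Real.hasDerivAt_log hb.ne').const_mul t).const_add _
  exact h3.add h2

lemma auxF_hasDerivAt {a ν τ b : ℝ} (ha : 0 < a) (hb : 0 < b)
    (hν : ν ∈ Set.Ioo (0 : ℝ) 1) (hτ : τ ∈ Set.Ioo (0 : ℝ) 1) :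
    HasDerivAt (auxF a ν τ)
      (ν * (1 - ν) * τ * (1 - τ) * (τ - ν) * (b - a) ^ 2
        / (a ^ 2 * b ^ 3 * ((1 - τ) * a⁻¹ + τ * b⁻¹) * ((1 - ν) * a⁻¹ + ν * b⁻¹))) b := by
  have hcτ := auxC_pos hτ ha hb
  have hcν := auxC_pos hν ha hb
  have h := ((auxLog_hasDerivAt hτ ha hb).const_mul (ν * (1 - ν))).sub
    ((auxLog_hasDerivAt hν ha hb).const_mul (τ * (1 - τ)))
  convert h using 1
  · rfl
  · rfl
  · rfl
  have ha' : a ≠ 0 := ha.ne'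
  have hb' : b ≠ 0 := hb.ne'
  have hcτ' : (1 - τ) * a⁻¹ + τ * b⁻¹ ≠ 0 := hcτ.ne'
  have hcν' : (1 - ν) * a⁻¹ + ν * b⁻¹ ≠ 0 := hcν.ne'
  have hpτ : (1 - τ) * b + τ * a ≠ 0 := by
    have hτ0 := hτ.1; have hτ1 : 0 < 1 - τ := by linarith [hτ.2]
    positivity
  have hpν : (1 - ν) * b + ν * a ≠ 0 := by
    have hν0 := hν.1; have hν1 : 0 < 1 - ν := by linarith [hν.2]
    positivity
  have hden : a ^ 2 * b ^ 3 * ((1 - τ) * a⁻¹ + τ * b⁻¹) * ((1 - ν) * a⁻¹ + ν * b⁻¹) ≠ 0 := by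
    positivity
  rw [div_eq_iff hden]
  have hcτeq : (1 - τ) * a⁻¹ + τ * b⁻¹ = ((1 - τ) * b + τ * a) / (a * b) := by
    field_simp
  have hcνeq : (1 - ν) * a⁻¹ + ν * b⁻¹ = ((1 - ν) * b + ν * a) / (a * b) := by
    field_simp
  rw [hcτeq, hcνeq]
  field_simp
  ring

lemma auxF_self (a ν τ : ℝ) (ha : 0 < a) : auxF a ν τ a = 0 := by
  unfold auxF
  have h1 : (1 - τ) * a⁻¹ + τ * a⁻¹ = a⁻¹ := by ring
  have h2 : (1 - ν) * a⁻¹ + ν * a⁻¹ = a⁻¹ := by ring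
  rw [h1, h2, Real.log_inv]
  ring

lemma auxF_nonneg {a b ν τ : ℝ} (ha : 0 < a) (hb : 0 < b)
    (hν : ν ∈ Set.Ioo (0 : ℝ) 1) (hτ : τ ∈ Set.Ioo (0 : ℝ) 1)
    (h : 0 ≤ (b - a) * (τ - ν)) : 0 ≤ auxF a ν τ b := by
  have hdiff : ∀ x ∈ Set.Ioi (0 : ℝ), HasDerivAt (auxF a ν τ)
      (ν * (1 - ν) * τ * (1 - τ) * (τ - ν) * (x - a) ^ 2
        / (a ^ 2 * x ^ 3 * ((1 - τ) * a⁻¹ + τ * x⁻¹) * ((1 - ν) * a⁻¹ + ν * x⁻¹))) x :=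
    fun x hx => auxF_hasDerivAt ha hx hν hτ
  have hcont : ContinuousOn (auxF a ν τ) (Set.Ioi 0) :=
    fun x hx => ((hdiff x hx).differentiableAt.continuousAt).continuousWithinAt
  have hdOn : DifferentiableOn ℝ (auxF a ν τ) (interior (Set.Ioi 0)) := by
    rw [interior_Ioi]
    exact fun x hx => ((hdiff x hx).differentiableAt).differentiableWithinAt
  have hden : ∀ x : ℝ, 0 < x →
      0 < a ^ 2 * x ^ 3 * ((1 - τ) * a⁻¹ + τ * x⁻¹) * ((1 - ν) * a⁻¹ + ν * x⁻¹) := by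
    intro x hx
    have h1 := auxC_pos hτ ha hx
    have h2 := auxC_pos hν ha hx
    positivity
  rcases le_total ν τ with hle | hle
  · -- ν ≤ τ : F is monotone on Ioi 0
    have hmono : MonotoneOn (auxF a ν τ) (Set.Ioi 0) := by
      apply monotoneOn_of_deriv_nonneg (convex_Ioi 0) hcont hdOn
      intro x hx
      rw [interior_Ioi] at hx
      rw [(hdiff x hx).deriv]
      apply div_nonneg _ (hden x hx).le
      have h0 : 0 < ν * (1 - ν) * τ * (1 - τ) := by
        have h1 := hν.1; have h2 : 0 < 1 - ν := by linarith [hν.2]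
        have h3 := hτ.1; have h4 : 0 < 1 - τ := by linarith [hτ.2]
        positivity
      exact mul_nonneg (mul_nonneg h0.le (by linarith)) (sq_nonneg (x - a))
    rcases le_or_gt a b with hab | hab
    · have := hmono (Set.mem_Ioi.2 ha) (Set.mem_Ioi.2 hb) hab
      rw [auxF_self a ν τ ha] at this
      exact this
    · have hτν : τ = ν := by nlinarith
      subst hτν
      unfold auxF; ring_nf; exact le_refl 0
  · -- τ ≤ ν : F is antitone on Ioi 0
    have hanti : AntitoneOn (auxF a ν τ) (Set.Ioi 0) := by
      apply antitoneOn_of_deriv_nonpos (convex_Ioi 0) hcont hdOn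
      intro x hx
      rw [interior_Ioi] at hx
      rw [(hdiff x hx).deriv]
      apply div_nonpos_of_nonpos_of_nonneg _ (hden x hx).le
      have h0 : 0 < ν * (1 - ν) * τ * (1 - τ) := by
        have h1 := hν.1; have h2 : 0 < 1 - ν := by linarith [hν.2]
        have h3 := hτ.1; have h4 : 0 < 1 - τ := by linarith [hτ.2]
        positivity
      have h5 : ν * (1 - ν) * τ * (1 - τ) * (τ - ν) ≤ 0 :=
        mul_nonpos_of_nonneg_of_nonpos h0.le (by linarith)
      exact mul_nonpos_of_nonpos_of_nonneg h5 (sq_nonneg (x - a))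
    rcases le_or_gt b a with hab | hab
    · have := hanti (Set.mem_Ioi.2 hb) (Set.mem_Ioi.2 ha) hab
      rw [auxF_self a ν τ ha] at this
      exact this
    · have hτν : τ = ν := by nlinarith
      subst hτν
      unfold auxF; ring_nf; exact le_refl 0

theorem stmt_15 (a b ν τ : ℝ) (ha : 0 < a) (hb : 0 < b)
    (hν : ν ∈ Set.Ioo (0 : ℝ) 1) (hτ : τ ∈ Set.Ioo (0 : ℝ) 1) :
    ((b - a) * (τ - ν) ≥ 0 →
      wharm τ a b * (wgeom ν a b / wharm ν a b) ^ (τ * (1 - τ) / (ν * (1 - ν)))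
        ≤ wgeom τ a b) ∧
    ((b - a) * (τ - ν) ≤ 0 →
      wgeom τ a b
        ≤ wharm τ a b * (wgeom ν a b / wharm ν a b) ^ (τ * (1 - τ) / (ν * (1 - ν)))) := by
  have hν0 := hν.1; have hν1 := hν.2; have hτ0 := hτ.1; have hτ1 := hτ.2
  have hcτ := auxC_pos hτ ha hb
  have hcν := auxC_pos hν ha hb
  have hHτ : 0 < wharm τ a b := inv_pos.2 hcτ
  have hHν : 0 < wharm ν a b := inv_pos.2 hcν
  have hGτ : 0 < wgeom τ a b := by
    unfold wgeom; positivity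
  have hGν : 0 < wgeom ν a b := by
    unfold wgeom; positivity
  have hratio : 0 < wgeom ν a b / wharm ν a b := div_pos hGν hHν
  have hlogGτ : Real.log (wgeom τ a b) = (1 - τ) * Real.log a + τ * Real.log b := by
    unfold wgeom
    rw [Real.log_mul (Real.rpow_pos_of_pos ha _).ne' (Real.rpow_pos_of_pos hb _).ne',
      Real.log_rpow ha, Real.log_rpow hb]
  have hlogGν : Real.log (wgeom ν a b) = (1 - ν) * Real.log a + ν * Real.log b := by
    unfold wgeom
    rw [Real.log_mul (Real.rpow_pos_of_pos ha _).ne' (Real.rpow_pos_of_pos hb _).ne',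
      Real.log_rpow ha, Real.log_rpow hb]
  have hlogHτ : Real.log (wharm τ a b) = -Real.log ((1 - τ) * a⁻¹ + τ * b⁻¹) := by
    unfold wharm; rw [Real.log_inv]
  have hlogHν : Real.log (wharm ν a b) = -Real.log ((1 - ν) * a⁻¹ + ν * b⁻¹) := by
    unfold wharm; rw [Real.log_inv]
  have hνν : 0 < ν * (1 - ν) := by nlinarith
  have hexp : wharm τ a b * (wgeom ν a b / wharm ν a b) ^ (τ * (1 - τ) / (ν * (1 - ν)))
      = Real.exp (Real.log (wharm τ a b)
          + Real.log (wgeom ν a b / wharm ν a b) * (τ * (1 - τ) / (ν * (1 - ν)))) := by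
    rw [Real.exp_add, Real.exp_log hHτ, ← Real.rpow_def_of_pos hratio]
  constructor
  · intro h
    have hF : 0 ≤ auxF a ν τ b := auxF_nonneg ha hb hν hτ h
    unfold auxF at hF
    have key : Real.log (wharm τ a b)
        + Real.log (wgeom ν a b / wharm ν a b) * (τ * (1 - τ) / (ν * (1 - ν)))
        ≤ Real.log (wgeom τ a b) := by
      rw [Real.log_div hGν.ne' hHν.ne', hlogGτ, hlogGν, hlogHτ, hlogHν]
      have hk : ((1 - ν) * Real.log a + ν * Real.log b
            - -Real.log ((1 - ν) * a⁻¹ + ν * b⁻¹)) * (τ * (1 - τ) / (ν * (1 - ν)))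
          ≤ (1 - τ) * Real.log a + τ * Real.log b
            - -Real.log ((1 - τ) * a⁻¹ + τ * b⁻¹) := by
        rw [mul_div_assoc', div_le_iff₀ hνν]
        nlinarith [hF]
      linarith [hk]
    calc wharm τ a b * (wgeom ν a b / wharm ν a b) ^ (τ * (1 - τ) / (ν * (1 - ν)))
        = Real.exp (Real.log (wharm τ a b)
          + Real.log (wgeom ν a b / wharm ν a b) * (τ * (1 - τ) / (ν * (1 - ν)))) := hexp
      _ ≤ Real.exp (Real.log (wgeom τ a b)) := Real.exp_le_exp.2 key
      _ = wgeom τ a b := Real.exp_log hGτ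
  · intro h
    have h' : 0 ≤ (b - a) * (ν - τ) := by nlinarith
    have hF : 0 ≤ auxF a τ ν b := auxF_nonneg ha hb hτ hν h'
    unfold auxF at hF
    have key : Real.log (wgeom τ a b)
        ≤ Real.log (wharm τ a b)
        + Real.log (wgeom ν a b / wharm ν a b) * (τ * (1 - τ) / (ν * (1 - ν))) := by
      rw [Real.log_div hGν.ne' hHν.ne', hlogGτ, hlogGν, hlogHτ, hlogHν]
      have hk : (1 - τ) * Real.log a + τ * Real.log b
            - -Real.log ((1 - τ) * a⁻¹ + τ * b⁻¹)
          ≤ ((1 - ν) * Real.log a + ν * Real.log b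
            - -Real.log ((1 - ν) * a⁻¹ + ν * b⁻¹)) * (τ * (1 - τ) / (ν * (1 - ν))) := by
        rw [mul_div_assoc', le_div_iff₀ hνν]
        nlinarith [hF]
      linarith [hk]
    calc wgeom τ a b = Real.exp (Real.log (wgeom τ a b)) := (Real.exp_log hGτ).symm
      _ ≤ Real.exp (Real.log (wharm τ a b)
          + Real.log (wgeom ν a b / wharm ν a b) * (τ * (1 - τ) / (ν * (1 - ν)))) :=
        Real.exp_le_exp.2 key
      _ = wharm τ a b * (wgeom ν a b / wharm ν a b) ^ (τ * (1 - τ) / (ν * (1 - ν))) := hexp.symm
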